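/- (Philip Hall's theorem, used in the paper to derive that Eulerian-ness is necessary for CW posets.) Let P be a finite partially ordered set and let x ≤ y in P. Then the Möbius function of P satisfies μ(x,y) = Σ_{k ≥ 0} (-1)^k c_k(x,y), where c_k(x,y) denotes the number of chains x = z₀ < z₁ < ⋯ < z_k = y of length k in P (so c_0(x,y) = 1 if x = y and 0 otherwise). -/

import Mathlib

open Finset

/-- The number of chains `x = z₀ < z₁ < ⋯ < z_k = y` of length `k` from `x` to `y`. -/
noncomputable def chainCount {P : Type*} [PartialOrder P] (x y : P) (k : ℕ) : ℕ :=
  Nat.card {z : Fin (k + 1) → P // StrictMono z ∧ z 0 = x ∧ z (Fin.last k) = y}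

section Aux
variable {P : Type*} [PartialOrder P] [LocallyFiniteOrder P]

lemma chainCount_zero [DecidableEq P] (x y : P) : chainCount x y 0 = if x = y then 1 else 0 := by
  classical
  unfold chainCount
  split_ifs with h
  · subst h
    rw [Nat.card_eq_one_iff_exists]
    refine ⟨⟨fun _ => x, fun i j hij => absurd (Fin.lt_def.1 hij) (by omega),
      rfl, rfl⟩, fun w => ?_⟩
    ext i
    have hi : i = 0 := Fin.ext (by omega)
    simp [hi, w.2.2.1]
  · haveI : IsEmpty {z : Fin 1 → P // StrictMono z ∧ z 0 = x ∧ z (Fin.last 0) = y} := by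
      refine ⟨fun w => h ?_⟩
      exact w.2.2.1.symm.trans w.2.2.2
    exact Nat.card_of_isEmpty

/-- Splitting off the last element of a chain. -/
def chainSplitEquiv (x y : P) (k : ℕ) :
    {w : Fin (k + 2) → P // StrictMono w ∧ w 0 = x ∧ w (Fin.last (k + 1)) = y} ≃
      Σ z : (Finset.Ico x y), {v : Fin (k + 1) → P // StrictMono v ∧ v 0 = x ∧
        v (Fin.last k) = (z : P)} where
  toFun w := ⟨⟨w.1 (Fin.castSucc (Fin.last k)), by
      rw [Finset.mem_Ico]
      obtain ⟨hm, h0, hl⟩ := w.2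
      exact ⟨h0.symm.trans_le (hm.monotone (Fin.zero_le _)),
        lt_of_lt_of_eq (hm (Fin.castSucc_lt_last _)) hl⟩⟩,
    ⟨Fin.init w.1, w.2.1.comp Fin.strictMono_castSucc, by
      simpa [Fin.init] using w.2.2.1, rfl⟩⟩
  invFun zv := ⟨Fin.snoc zv.2.1 y, by
      have hz : x ≤ (zv.1 : P) ∧ (zv.1 : P) < y := Finset.mem_Ico.1 zv.1.2
      obtain ⟨hv, h0, hl⟩ := zv.2.2
      refine ⟨Fin.strictMono_iff_lt_succ.2 fun i => ?_, by
        rw [show (0 : Fin (k + 2)) = Fin.castSucc 0 from rfl, Fin.snoc_castSucc]; exact h0, by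
        rw [Fin.snoc_last]⟩
      refine Fin.lastCases ?_ (fun j => ?_) i
      · rw [Fin.succ_last, Fin.snoc_last, Fin.snoc_castSucc, hl]
        exact hz.2
      · rw [Fin.succ_castSucc, Fin.snoc_castSucc, Fin.snoc_castSucc]
        exact hv (Fin.castSucc_lt_succ : Fin.castSucc j < j.succ)⟩
  left_inv w := by
    apply Subtype.ext
    dsimp only
    have h := Fin.snoc_init_self w.1
    rw [w.2.2.2] at h
    exact h
  right_inv := by
    rintro ⟨⟨z, hz⟩, v, hm, h0, hl⟩
    dsimp only at hl
    subst hl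
    have h1 : (Fin.snoc v y : Fin (k + 2) → P) (Fin.castSucc (Fin.last k)) = v (Fin.last k) := by
      simp
    have h2 : Fin.init (Fin.snoc v y : Fin (k + 2) → P) = v := by simp
    refine Sigma.ext (Subtype.ext h1) ?_
    exact (Subtype.heq_iff_coe_eq fun v' => by dsimp only; rw [h1]).2 h2

lemma chainCount_succ [Fintype P] (x y : P) (k : ℕ) :
    chainCount x y (k + 1) = ∑ z ∈ Finset.Ico x y, chainCount x z k := by
  classical
  rw [chainCount, Nat.card_congr (chainSplitEquiv x y k), Nat.card_eq_fintype_card,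
    Fintype.card_sigma]
  rw [← Finset.sum_coe_sort (Finset.Ico x y) (fun z => chainCount x z k)]
  exact Finset.sum_congr rfl fun z _ => (Nat.card_eq_fintype_card).symm

lemma chainCount_of_not_le {x y : P} (h : ¬x ≤ y) (k : ℕ) : chainCount x y k = 0 := by
  haveI : IsEmpty {z : Fin (k + 1) → P // StrictMono z ∧ z 0 = x ∧ z (Fin.last k) = y} :=
    ⟨fun w => h (w.2.2.1.symm.trans_le
      ((w.2.1.monotone (Fin.zero_le _)).trans_eq w.2.2.2))⟩
  exact Nat.card_of_isEmpty

lemma chainCount_card [Fintype P] (x y : P) : chainCount x y (Fintype.card P) = 0 := by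
  haveI : IsEmpty {z : Fin (Fintype.card P + 1) → P // StrictMono z ∧ z 0 = x ∧
      z (Fin.last (Fintype.card P)) = y} := by
    refine ⟨fun w => ?_⟩
    have := Fintype.card_le_of_injective w.1 w.2.1.injective
    simp at this
  exact Nat.card_of_isEmpty

end Aux

/-- Philip Hall's theorem: the Möbius function is the alternating sum of chain counts. -/
theorem mu_eq_alternating_sum_chainCount
    {P : Type*} [PartialOrder P] [Fintype P] [DecidableEq P] [LocallyFiniteOrder P]
    (x y : P) (hxy : x ≤ y) :
    IncidenceAlgebra.mu ℤ x y =
      ∑ k ∈ Finset.range (Fintype.card P), (-1 : ℤ) ^ k * (chainCount x y k : ℤ) := by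
  classical
  set n := Fintype.card P with hn
  set η : IncidenceAlgebra ℤ P := IncidenceAlgebra.zeta ℤ - 1 with hη
  -- entries of powers of η count chains
  have hpow : ∀ k (a b : P), (η ^ k) a b = (chainCount a b k : ℤ) := by
    intro k
    induction k with
    | zero =>
      intro a b
      rw [pow_zero, IncidenceAlgebra.one_apply, chainCount_zero]
      split_ifs <;> simp
    | succ k ih =>
      intro a b
      rw [pow_succ, IncidenceAlgebra.mul_apply]
      by_cases hab : a ≤ b
      · rw [chainCount_succ]
        rw [show Finset.Icc a b = insert b (Finset.Ico a b) from
          (Finset.Ico_insert_right hab).symm]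
        rw [Finset.sum_insert Finset.right_notMem_Ico]
        have hη_bb : η b b = 0 := by
          simp [hη, IncidenceAlgebra.sub_apply, IncidenceAlgebra.one_apply]
        rw [hη_bb, mul_zero, zero_add, Nat.cast_sum]
        refine Finset.sum_congr rfl fun z hz => ?_
        rw [Finset.mem_Ico] at hz
        have : η z b = 1 := by
          simp [hη, IncidenceAlgebra.sub_apply, IncidenceAlgebra.one_apply,
            hz.2.le, hz.2.ne]
        rw [ih, this, mul_one]
      · rw [Finset.Icc_eq_empty hab, Finset.sum_empty, chainCount_of_not_le hab,
          Nat.cast_zero]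
  -- η is nilpotent
  have hnil : η ^ n = 0 := by
    ext a b _
    rw [hpow, chainCount_card, Nat.cast_zero, IncidenceAlgebra.zero_apply]
  -- the alternating sum is the inverse of zeta
  set S : IncidenceAlgebra ℤ P := ∑ k ∈ Finset.range n, (-η) ^ k with hS
  have hzS : IncidenceAlgebra.zeta ℤ * S = 1 := by
    have h1 : (1 - -η) * S = 1 - (-η) ^ n := mul_neg_geom_sum (-η) n
    have h2 : (1 : IncidenceAlgebra ℤ P) - -η = IncidenceAlgebra.zeta ℤ := by
      rw [hη]; abel
    have h3 : (-η) ^ n = 0 := by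
      rcases Nat.even_or_odd n with hk | hk
      · rw [hk.neg_pow, hnil]
      · rw [hk.neg_pow, hnil, neg_zero]
    rw [h2, h3, sub_zero] at h1
    exact h1
  have hmuS : IncidenceAlgebra.mu ℤ = S := by
    calc IncidenceAlgebra.mu ℤ = IncidenceAlgebra.mu ℤ * 1 := (mul_one _).symm
      _ = IncidenceAlgebra.mu ℤ * (IncidenceAlgebra.zeta ℤ * S) := by rw [hzS]
      _ = (IncidenceAlgebra.mu ℤ * IncidenceAlgebra.zeta ℤ) * S := (mul_assoc _ _ _).symm
      _ = S := by rw [IncidenceAlgebra.mu_mul_zeta, one_mul]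
  -- evaluate entries
  have sum_apply : ∀ (s : Finset ℕ) (f : ℕ → IncidenceAlgebra ℤ P) (a b : P),
      (∑ k ∈ s, f k) a b = ∑ k ∈ s, f k a b := by
    intro s f a b
    induction s using Finset.cons_induction with
    | empty => simp [IncidenceAlgebra.zero_apply]
    | cons i s hi ih => rw [Finset.sum_cons, Finset.sum_cons, IncidenceAlgebra.add_apply, ih]
  have hneg_pow : ∀ k (a b : P), ((-η) ^ k) a b = (-1 : ℤ) ^ k * (η ^ k) a b := by
    intro k a b
    rcases Nat.even_or_odd k with hk | hk
    · rw [hk.neg_pow, hk.neg_one_pow, one_mul]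
    · rw [hk.neg_pow, hk.neg_one_pow, IncidenceAlgebra.neg_apply, neg_one_mul]
  rw [hmuS, hS, sum_apply]
  exact Finset.sum_congr rfl fun k _ => by rw [hneg_pow, hpow]
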